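/- Fix n ≥ 3 and a vector u ∈ {0,1,2}^n with i entries 0, j entries 2 and 2k+2 entries 1. In the polynomial ring ℚ[q] with one variable q_σ for each odd-cardinality subset σ of {1,…,n}, graded by deg(q_{i₀…i_{2k}}) = k e₀ + e_{i₀} + ⋯ + e_{i_{2k}} ∈ ℤ^{n+1}, the dimension of the degree (j+k, u) component is exactly 2^{2k}. -/

import Mathlib

section Aux

lemma weight_single' {α M : Type*} [AddCommMonoid M] (w : α → M) (a : α) (c : ℕ) :
    Finsupp.weight w (Finsupp.single a c) = c • w a := by
  rw [Finsupp.weight_apply, Finsupp.sum_single_index]; simp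

lemma weight_comp' {α M N : Type*} [AddCommMonoid M] [AddCommMonoid N]
    (φ : M →+ N) (w : α → M) (d : α →₀ ℕ) :
    φ (Finsupp.weight w d) = Finsupp.weight (fun s => φ (w s)) d := by
  rw [Finsupp.weight_apply, Finsupp.weight_apply, Finsupp.sum, Finsupp.sum, map_sum]
  simp

lemma degree_one_struct {α : Type*} (d : α →₀ ℕ) (h : Finsupp.degree d = 1) :
    ∃ a, d = Finsupp.single a 1 := by
  classical
  have hne : d ≠ 0 := by
    intro h0; rw [h0, map_zero] at h; omega
  obtain ⟨a, ha⟩ := Finsupp.support_nonempty_iff.mpr hne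
  refine ⟨a, ?_⟩
  have hda : d a ≤ 1 := h ▸ Finsupp.le_degree a d
  have hda1 : d a = 1 := by
    have := Finsupp.mem_support_iff.mp ha; omega
  ext x
  by_cases hx : x = a
  · subst hx; simp [hda1]
  · have : d a + d x ≤ Finsupp.degree d := by
      by_cases hxs : x ∈ d.support
      · rw [Finsupp.degree]
        have : ({a, x} : Finset α) ⊆ d.support := by
          intro y hy; simp at hy; rcases hy with rfl | rfl <;> assumption
        calc d a + d x = ∑ y ∈ {a, x}, d y := by rw [Finset.sum_pair (Ne.symm hx)]
        _ ≤ _ := Finset.sum_le_sum_of_subset this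
      · simp [Finsupp.notMem_support_iff.mp hxs]
        exact h ▸ Finsupp.le_degree a d
    simp [Finsupp.single_eq_of_ne' (Ne.symm hx)]
    omega

lemma degree_two_struct {α : Type*} (d : α →₀ ℕ) (h : Finsupp.degree d = 2) :
    (∃ a, d = Finsupp.single a 2) ∨
      ∃ a b, a ≠ b ∧ d = Finsupp.single a 1 + Finsupp.single b 1 := by
  classical
  have hne : d ≠ 0 := by
    intro h0; rw [h0, map_zero] at h; omega
  obtain ⟨a, ha⟩ := Finsupp.support_nonempty_iff.mpr hne
  have hd : d = Finsupp.single a (d a) + Finsupp.erase a d := (Finsupp.single_add_erase a d).symm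
  have hdeg : Finsupp.degree (Finsupp.single a (d a)) + Finsupp.degree (Finsupp.erase a d) = 2 := by
    rw [Finsupp.degree_eq_weight_one, ← map_add, ← hd, ← Finsupp.degree_eq_weight_one, h]
  have hsd : Finsupp.degree (Finsupp.single a (d a)) = d a := by
    rcases Nat.eq_zero_or_pos (d a) with h0 | h0
    · simp [h0, map_zero]
    · rw [Finsupp.degree_apply, Finsupp.support_single_ne_zero a (by omega)]; simp
  have hda : 1 ≤ d a := Nat.one_le_iff_ne_zero.mpr (Finsupp.mem_support_iff.mp ha)
  have hda2 : d a ≤ 2 := h ▸ Finsupp.le_degree a d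
  interval_cases hcase : (d a)
  · right
    have : Finsupp.degree (Finsupp.erase a d) = 1 := by omega
    obtain ⟨b, hb⟩ := degree_one_struct _ this
    have hab : a ≠ b := by
      intro hab; subst hab
      have := Finsupp.erase_same (a := a) (f := d)
      rw [hb] at this; simp at this
    exact ⟨a, b, hab, by rw [hd, hb]⟩
  · left
    have : Finsupp.degree (Finsupp.erase a d) = 0 := by omega
    rw [Finsupp.degree_eq_zero_iff] at this
    exact ⟨a, by rw [hd, this, add_zero]⟩

set_option maxHeartbeats 1000000 in
lemma aux_equiv {n : ℕ} (u : Fin n → ℕ) (j k : ℕ)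
    (wt : {s : Finset (Fin n) // Odd s.card} → ℕ × (Fin n → ℕ))
    (hwt : ∀ s, wt s = ((s.1.card - 1) / 2, fun i => if i ∈ s.1 then 1 else 0))
    (hu : ∀ i, u i ≤ 2)
    (h2 : (Finset.univ.filter fun i => u i = 2).card = j)
    (h1 : (Finset.univ.filter fun i => u i = 1).card = 2 * k + 2)
    (s₀ s₁ : Fin n) (hs01 : s₀ ≠ s₁) (hs₀ : u s₀ = 1) (hs₁ : u s₁ = 1) :
    Nonempty ({C : Finset (Fin n) //
        C ⊆ ((Finset.univ.filter fun i => u i = 1).erase s₀).erase s₁}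
      ≃ ↥{d : ({s : Finset (Fin n) // Odd s.card} →₀ ℕ) |
          Finsupp.weight wt d = ((j + k : ℕ), u)}) := by
  classical
  set S : Finset (Fin n) := Finset.univ.filter fun i => u i = 1 with hSdef
  set T : Finset (Fin n) := Finset.univ.filter fun i => u i = 2 with hTdef
  set S'' : Finset (Fin n) := (S.erase s₀).erase s₁ with hS''def
  have hmemS : ∀ i, i ∈ S ↔ u i = 1 := fun i => by simp [hSdef]
  have hmemT : ∀ i, i ∈ T ↔ u i = 2 := fun i => by simp [hTdef]
  have hmemS'' : ∀ i, i ∈ S'' ↔ i ≠ s₁ ∧ i ≠ s₀ ∧ u i = 1 := by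
    intro i
    rw [hS''def, Finset.mem_erase, Finset.mem_erase, hmemS]
  have hs₀S : s₀ ∈ S := (hmemS s₀).mpr hs₀
  have hs₁S : s₁ ∈ S := (hmemS s₁).mpr hs₁
  have hs₀S'' : s₀ ∉ S'' := fun h => by simp [hmemS''] at h
  have hs₁S'' : s₁ ∉ S'' := fun h => by simp [hmemS''] at h
  have hScard : S.card = 2 * k + 2 := h1
  have hTcard : T.card = j := h2
  -- the set map
  set A : Finset (Fin n) → Finset (Fin n) := fun C =>
    if Even (j + C.card) then insert s₀ C else insert s₀ (insert s₁ C) with hAdef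
  have hS''S : S'' ⊆ S := fun i hi => (hmemS i).mpr ((hmemS'' i).mp hi).2.2
  have hAfact : ∀ C, C ⊆ S'' →
      A C ⊆ S ∧ s₀ ∈ A C ∧ Odd (j + (A C).card) ∧ A C ∩ S'' = C := by
    intro C hC
    have hs₀C : s₀ ∉ C := fun h => hs₀S'' (hC h)
    have hs₁C : s₁ ∉ C := fun h => hs₁S'' (hC h)
    by_cases hpar : Even (j + C.card)
    · have hAC : A C = insert s₀ C := by simp only [hAdef]; rw [if_pos hpar]
      rw [hAC]
      refine ⟨?_, Finset.mem_insert_self _ _, ?_, ?_⟩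
      · intro i hi
        rcases Finset.mem_insert.mp hi with rfl | hi
        · exact hs₀S
        · exact hS''S (hC hi)
      · rw [Finset.card_insert_of_notMem hs₀C]
        rw [Nat.even_iff] at hpar; rw [Nat.odd_iff]; omega
      · ext i
        simp only [Finset.mem_inter, Finset.mem_insert]
        constructor
        · rintro ⟨rfl | hi, hi''⟩
          · exact absurd hi'' hs₀S''
          · exact hi
        · exact fun hi => ⟨Or.inr hi, hC hi⟩
    · have hAC : A C = insert s₀ (insert s₁ C) := by simp only [hAdef]; rw [if_neg hpar]
      rw [hAC]
      refine ⟨?_, Finset.mem_insert_self _ _, ?_, ?_⟩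
      · intro i hi
        rcases Finset.mem_insert.mp hi with rfl | hi
        · exact hs₀S
        · rcases Finset.mem_insert.mp hi with rfl | hi
          · exact hs₁S
          · exact hS''S (hC hi)
      · rw [Finset.card_insert_of_notMem (by
            intro h
            rcases Finset.mem_insert.mp h with h | h
            · exact hs01 h
            · exact hs₀C h),
          Finset.card_insert_of_notMem hs₁C]
        rw [Nat.even_iff] at hpar; rw [Nat.odd_iff]; omega
      · ext i
        simp only [Finset.mem_inter, Finset.mem_insert]
        constructor
        · rintro ⟨rfl | (rfl | hi), hi''⟩
          · exact absurd hi'' hs₀S''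
          · exact absurd hi'' hs₁S''
          · exact hi
        · exact fun hi => ⟨Or.inr (Or.inr hi), hC hi⟩
  have hArecover : ∀ D, D ⊆ S → s₀ ∈ D → Odd (j + D.card) → A (D ∩ S'') = D := by
    intro D hD hs₀D hoddD
    have hCsub : D ∩ S'' ⊆ S'' := Finset.inter_subset_right
    have hs₀C : s₀ ∉ D ∩ S'' := fun h => hs₀S'' (hCsub h)
    have hs₁C : s₁ ∉ D ∩ S'' := fun h => hs₁S'' (hCsub h)
    have hDdesc : ∀ i, i ∈ D ↔ (i = s₀ ∨ (i = s₁ ∧ s₁ ∈ D) ∨ i ∈ D ∩ S'') := by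
      intro i
      constructor
      · intro hi
        by_cases h0 : i = s₀
        · exact Or.inl h0
        by_cases h1 : i = s₁
        · exact Or.inr (Or.inl ⟨h1, h1 ▸ hi⟩)
        refine Or.inr (Or.inr (Finset.mem_inter.mpr ⟨hi, ?_⟩))
        exact (hmemS'' i).mpr ⟨h1, h0, (hmemS i).mp (hD hi)⟩
      · rintro (rfl | ⟨rfl, h⟩ | h)
        · exact hs₀D
        · exact h
        · exact (Finset.mem_inter.mp h).1
    by_cases hs1D : s₁ ∈ D
    · have hDeq : D = insert s₀ (insert s₁ (D ∩ S'')) := by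
        ext i
        rw [hDdesc i]
        simp only [Finset.mem_insert, hs1D, and_true]
      have hcard : D.card = (D ∩ S'').card + 2 := by
        nth_rewrite 1 [hDeq]
        rw [ Finset.card_insert_of_notMem (by
            intro h
            rcases Finset.mem_insert.mp h with h | h
            · exact hs01 h
            · exact hs₀C h),
          Finset.card_insert_of_notMem hs₁C]
      have hpar : ¬ Even (j + (D ∩ S'').card) := by
        rw [hcard] at hoddD
        rw [Nat.odd_iff] at hoddD; rw [Nat.even_iff]; omega
      simp only [hAdef]
      rw [if_neg hpar, ← hDeq]
    · have hDeq : D = insert s₀ (D ∩ S'') := by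
        ext i
        rw [hDdesc i]
        simp only [Finset.mem_insert]
        constructor
        · rintro (rfl | ⟨rfl, h⟩ | h)
          · exact Or.inl rfl
          · exact absurd h hs1D
          · exact Or.inr h
        · rintro (rfl | h)
          · exact Or.inl rfl
          · exact Or.inr (Or.inr h)
      have hcard : D.card = (D ∩ S'').card + 1 := by
        nth_rewrite 1 [hDeq]
        rw [Finset.card_insert_of_notMem hs₀C]
      have hpar : Even (j + (D ∩ S'').card) := by
        rw [hcard] at hoddD
        rw [Nat.odd_iff] at hoddD; rw [Nat.even_iff]; omega
      simp only [hAdef]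
      rw [if_pos hpar, ← hDeq]
  -- cardinalities with T
  have hσcard : ∀ X, X ⊆ S → (T ∪ X).card = j + X.card := by
    intro X hX
    rw [Finset.card_union_of_disjoint, hTcard]
    exact Finset.disjoint_left.mpr fun i hiT hiX => by
      have := (hmemT i).mp hiT; have := (hmemS i).mp (hX hiX); omega
  have hσodd : ∀ C, C ⊆ S'' → Odd (T ∪ A C).card := by
    intro C hC
    rw [hσcard _ (hAfact C hC).1]
    exact (hAfact C hC).2.2.1
  have hcards : ∀ C, C ⊆ S'' → (A C).card + (S \ A C).card = 2 * k + 2 := by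
    intro C hC
    have h1' := Finset.card_le_card (hAfact C hC).1
    rw [Finset.card_sdiff_of_subset (hAfact C hC).1, hScard]
    rw [hScard] at h1'
    omega
  have hτodd : ∀ C, C ⊆ S'' → Odd (T ∪ (S \ A C)).card := by
    intro C hC
    rw [hσcard _ Finset.sdiff_subset]
    have h1' := (hAfact C hC).2.2.1
    have h2' := hcards C hC
    rw [Nat.odd_iff] at h1' ⊢
    omega
  -- weight of a pair
  have hwpair : ∀ a b : {s : Finset (Fin n) // Odd s.card}, Finsupp.weight wt (Finsupp.single a 1 + Finsupp.single b 1) =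
      ((a.1.card - 1) / 2 + (b.1.card - 1) / 2,
        fun i => (if i ∈ a.1 then 1 else 0) + (if i ∈ b.1 then 1 else 0)) := by
    intro a b
    rw [map_add, weight_single', weight_single', one_smul, one_smul, hwt, hwt]
    rfl
  have hfst : ∀ C, C ⊆ S'' →
      ((T ∪ A C).card - 1) / 2 + ((T ∪ (S \ A C)).card - 1) / 2 = j + k := by
    intro C hC
    rw [hσcard _ (hAfact C hC).1, hσcard _ Finset.sdiff_subset]
    have h1' := (hAfact C hC).2.2.1
    have h2' := hcards C hC
    rw [Nat.odd_iff] at h1'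
    omega
  have hsnd : ∀ C, C ⊆ S'' → ∀ i,
      (if i ∈ T ∪ A C then 1 else 0) + (if i ∈ T ∪ (S \ A C) then 1 else 0) = u i := by
    intro C hC i
    have hAS := (hAfact C hC).1
    have h2' : i ∈ T ↔ u i = 2 := hmemT i
    have h1' : i ∈ S ↔ u i = 1 := hmemS i
    have hui := hu i
    by_cases hiA : i ∈ A C
    · have hu1 : u i = 1 := h1'.mp (hAS hiA)
      have hiT : i ∉ T := fun h => by rw [h2'] at h; omega
      simp [Finset.mem_union, Finset.mem_sdiff, hiA, hiT, hu1]
    · by_cases hiS : i ∈ S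
      · have hu1 : u i = 1 := h1'.mp hiS
        have hiT : i ∉ T := fun h => by rw [h2'] at h; omega
        simp [Finset.mem_union, Finset.mem_sdiff, hiA, hiT, hiS, hu1]
      · by_cases hiT : i ∈ T
        · have : u i = 2 := h2'.mp hiT
          simp [Finset.mem_union, hiT, this]
        · have hu0 : u i = 0 := by
            rw [h1'] at hiS; rw [h2'] at hiT; omega
          simp [Finset.mem_union, Finset.mem_sdiff, hiA, hiT, hiS, hu0]
  -- the forward map
  set f : {C : Finset (Fin n) // C ⊆ S''} →
      ↥{d : {s : Finset (Fin n) // Odd s.card} →₀ ℕ | Finsupp.weight wt d = ((j + k : ℕ), u)} := fun C =>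
    ⟨Finsupp.single (⟨T ∪ A C.1, hσodd C.1 C.2⟩ : {s : Finset (Fin n) // Odd s.card}) 1 +
       Finsupp.single (⟨T ∪ (S \ A C.1), hτodd C.1 C.2⟩ : {s : Finset (Fin n) // Odd s.card}) 1, by
      rw [Set.mem_setOf_eq, hwpair]
      refine Prod.ext ?_ (funext fun i => ?_)
      · exact hfst C.1 C.2
      · exact hsnd C.1 C.2 i⟩ with hfdef
  have hτnos₀ : ∀ C, C ⊆ S'' → s₀ ∉ T ∪ (S \ A C) := by
    intro C hC h
    rw [Finset.mem_union, Finset.mem_sdiff] at h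
    rcases h with h | h
    · rw [hmemT] at h; omega
    · exact h.2 (hAfact C hC).2.1
  have hcap : ∀ C, C ⊆ S'' → (T ∪ A C) ∩ S'' = C := by
    intro C hC
    rw [Finset.union_inter_distrib_right, (hAfact C hC).2.2.2]
    have : T ∩ S'' = ∅ := by
      ext i
      simp only [Finset.mem_inter, hmemT, hmemS'', Finset.notMem_empty, iff_false]
      rintro ⟨h1', _, _, h2'⟩; omega
    rw [this, Finset.empty_union]
  have hστne : ∀ C (hC : C ⊆ S'') C' (hC' : C' ⊆ S''),
      (⟨T ∪ (S \ A C'), hτodd C' hC'⟩ : {s : Finset (Fin n) // Odd s.card}) ≠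
        ⟨T ∪ A C, hσodd C hC⟩ := by
    intro C hC C' hC' h
    have hval : T ∪ (S \ A C') = T ∪ A C := congrArg Subtype.val h
    apply hτnos₀ C' hC'
    rw [hval]
    exact Finset.mem_union_right _ (hAfact C hC).2.1
  have hinj : Function.Injective f := by
    intro C C' heq
    have hval := congrArg Subtype.val heq
    simp only [hfdef] at hval
    have happ := DFunLike.congr_fun hval (⟨T ∪ A C.1, hσodd C.1 C.2⟩ : {s : Finset (Fin n) // Odd s.card})
    simp only [Finsupp.add_apply, Finsupp.single_apply] at happ
    rw [if_neg (hστne C.1 C.2 C.1 C.2), if_neg (hστne C.1 C.2 C'.1 C'.2)] at happ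
    simp only [if_true, add_zero] at happ
    by_cases h : (⟨T ∪ A C'.1, hσodd C'.1 C'.2⟩ : {s : Finset (Fin n) // Odd s.card}) =
        ⟨T ∪ A C.1, hσodd C.1 C.2⟩
    · have hsets : T ∪ A C'.1 = T ∪ A C.1 := congrArg Subtype.val h
      have : C'.1 = C.1 := by
        rw [← hcap C.1 C.2, ← hcap C'.1 C'.2, hsets]
      exact Subtype.ext this.symm
    · rw [if_neg h] at happ
      omega
  have husum : ∑ i, u i = 2 * j + (2 * k + 2) := by
    calc ∑ i, u i
        = ∑ i : Fin n, (2 * (if u i = 2 then 1 else 0) + (if u i = 1 then 1 else 0)) :=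
          Finset.sum_congr rfl fun i _ => by have := hu i; split_ifs <;> omega
      _ = 2 * ∑ i : Fin n, (if u i = 2 then 1 else 0) + ∑ i : Fin n, (if u i = 1 then 1 else 0) := by
          rw [Finset.sum_add_distrib, Finset.mul_sum]
      _ = 2 * j + (2 * k + 2) := by
          rw [← Finset.card_filter, ← Finset.card_filter, ← hTdef, ← hSdef, hTcard, hScard]
  have hsurj : Function.Surjective f := by
    rintro ⟨d, hd⟩
    rw [Set.mem_setOf_eq] at hd
    -- first weight component
    have hw1 : Finsupp.weight (fun s : {s : Finset (Fin n) // Odd s.card} => (s.1.card - 1) / 2) d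
        = j + k := by
      have hcomp := weight_comp' (AddMonoidHom.fst ℕ (Fin n → ℕ)) wt d
      rw [hd] at hcomp
      simp only [AddMonoidHom.coe_fst] at hcomp
      have heq : (fun s : {s : Finset (Fin n) // Odd s.card} => (s.1.card - 1) / 2)
          = fun s => (wt s).1 := funext fun s => by rw [hwt]
      rw [heq]
      exact hcomp.symm
    -- total u weight component
    have hw2 : Finsupp.weight (fun s : {s : Finset (Fin n) // Odd s.card} => s.1.card) d
        = 2 * j + (2 * k + 2) := by
      have hcomp := weight_comp'
        { toFun := fun p : ℕ × (Fin n → ℕ) => ∑ i, p.2 i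
          map_zero' := by simp
          map_add' := fun p q => by
            simp only [Prod.snd_add, Pi.add_apply]
            rw [Finset.sum_add_distrib] } wt d
      rw [hd] at hcomp
      simp only [AddMonoidHom.coe_mk, ZeroHom.coe_mk] at hcomp
      rw [husum] at hcomp
      have heq : (fun s : {s : Finset (Fin n) // Odd s.card} => s.1.card)
          = fun s => ∑ i, (wt s).2 i := funext fun s => by rw [hwt]; simp
      rw [heq]
      exact hcomp.symm
    have hdeg : Finsupp.degree d = 2 := by
      have hptw : ∀ s : {s : Finset (Fin n) // Odd s.card},
          s.1.card = 2 * ((s.1.card - 1) / 2) + 1 := fun s => by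
        obtain ⟨m, hm⟩ := s.2; omega
      have hsplit : Finsupp.weight (fun s : {s : Finset (Fin n) // Odd s.card} => s.1.card) d
          = 2 * Finsupp.weight (fun s : {s : Finset (Fin n) // Odd s.card} => (s.1.card - 1) / 2) d
            + Finsupp.degree d := by
        rw [Finsupp.weight_apply, Finsupp.weight_apply, Finsupp.degree_apply, Finsupp.sum, Finsupp.sum,
          Finset.mul_sum, ← Finset.sum_add_distrib]
        refine Finset.sum_congr rfl fun s _ => ?_
        rw [smul_eq_mul, smul_eq_mul]
        conv_lhs => rw [hptw s]
        ring
      rw [hw1, hw2] at hsplit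
      omega
    rcases degree_two_struct d hdeg with ⟨a, rfl⟩ | ⟨a, b, hab, rfl⟩
    · exfalso
      rw [weight_single'] at hd
      have happ := congrFun (congrArg Prod.snd hd) s₀
      rw [hwt] at happ
      simp only [Prod.smul_snd, Pi.smul_apply, smul_eq_mul, hs₀] at happ
      split_ifs at happ <;> omega
    · rw [hwpair] at hd
      have hsnd2 : ∀ i, (if i ∈ a.1 then 1 else 0) + (if i ∈ b.1 then 1 else 0) = u i :=
        fun i => congrFun (congrArg Prod.snd hd) i
      -- the main classification, assuming s₀ ∈ a
      have main : ∀ a b : {s : Finset (Fin n) // Odd s.card},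
          (∀ i, (if i ∈ a.1 then 1 else 0) + (if i ∈ b.1 then 1 else 0) = u i) → s₀ ∈ a.1 →
          ∃ C, ∃ hC : C ⊆ S'', a.1 = T ∪ A C ∧ b.1 = T ∪ (S \ A C) := by
        intro a b hsnd2 hs₀a
        have h0out : ∀ i, u i = 0 → i ∉ a.1 ∧ i ∉ b.1 := by
          intro i h
          have := hsnd2 i
          by_cases ha : i ∈ a.1 <;> by_cases hb : i ∈ b.1 <;>
            simp only [ha, hb, if_true, if_false, h] at this <;> simp_all
        have h2in : ∀ i, u i = 2 → i ∈ a.1 ∧ i ∈ b.1 := by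
          intro i h
          have := hsnd2 i
          by_cases ha : i ∈ a.1 <;> by_cases hb : i ∈ b.1 <;>
            simp only [ha, hb, if_true, if_false, h] at this <;> simp_all
        have hxor : ∀ i, u i = 1 → (i ∈ a.1 ↔ i ∉ b.1) := by
          intro i h
          have := hsnd2 i
          by_cases ha : i ∈ a.1 <;> by_cases hb : i ∈ b.1 <;>
            simp only [ha, hb, if_true, if_false, h] at this <;> simp_all
        set Aa := a.1 ∩ S with hAa
        have hAaS : Aa ⊆ S := Finset.inter_subset_right
        have haunion : a.1 = T ∪ Aa := by
          ext i
          simp only [Finset.mem_union, hAa, Finset.mem_inter, hmemT]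
          constructor
          · intro hi
            have hui := hu i
            interval_cases h : (u i)
            · exact absurd hi (h0out i h).1
            · exact Or.inr ⟨hi, (hmemS i).mpr h⟩
            · exact Or.inl rfl
          · rintro (h | ⟨h, _⟩)
            · exact (h2in i h).1
            · exact h
        have hs₀Aa : s₀ ∈ Aa := Finset.mem_inter.mpr ⟨hs₀a, hs₀S⟩
        have hcarda : a.1.card = j + Aa.card := by rw [haunion]; exact hσcard Aa hAaS
        have hAodd : Odd (j + Aa.card) := hcarda ▸ a.2
        have hrec := hArecover Aa hAaS hs₀Aa hAodd
        refine ⟨Aa ∩ S'', Finset.inter_subset_right, ?_, ?_⟩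
        · rw [haunion, hrec]
        · rw [hrec]
          ext i
          simp only [Finset.mem_union, Finset.mem_sdiff, hmemT, hmemS, hAa, Finset.mem_inter]
          constructor
          · intro hi
            have hui := hu i
            interval_cases h : (u i)
            · exact absurd hi (h0out i h).2
            · have hia : i ∉ a.1 := fun hia => ((hxor i h).mp hia) hi
              exact Or.inr ⟨rfl, fun ⟨hia', _⟩ => hia hia'⟩
            · exact Or.inl rfl
          · rintro (h | ⟨h, hni⟩)
            · exact (h2in i h).2
            · have hia : i ∉ a.1 := fun hia => hni ⟨hia, h⟩
              exact not_not.mp (fun hnb => hia ((hxor i h).mpr hnb))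
      have hs₀ab : s₀ ∈ a.1 ∨ s₀ ∈ b.1 := by
        have := hsnd2 s₀
        rw [hs₀] at this
        by_contra h
        push_neg at h
        simp [h.1, h.2] at this
      rcases hs₀ab with h | h
      · obtain ⟨C, hC, hA1, hB1⟩ := main a b hsnd2 h
        refine ⟨⟨C, hC⟩, ?_⟩
        apply Subtype.ext
        simp only [hfdef]
        have e1 : (⟨T ∪ A C, hσodd C hC⟩ : {s : Finset (Fin n) // Odd s.card}) = a :=
          Subtype.ext hA1.symm
        have e2 : (⟨T ∪ (S \ A C), hτodd C hC⟩ : {s : Finset (Fin n) // Odd s.card}) = b :=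
          Subtype.ext hB1.symm
        rw [e1, e2]
      · obtain ⟨C, hC, hA1, hB1⟩ := main b a (fun i => by rw [← hsnd2 i]; ring) h
        refine ⟨⟨C, hC⟩, ?_⟩
        apply Subtype.ext
        simp only [hfdef]
        have e1 : (⟨T ∪ A C, hσodd C hC⟩ : {s : Finset (Fin n) // Odd s.card}) = b :=
          Subtype.ext hA1.symm
        have e2 : (⟨T ∪ (S \ A C), hτodd C hC⟩ : {s : Finset (Fin n) // Odd s.card}) = a :=
          Subtype.ext hB1.symm
        rw [e1, e2]
        exact add_comm _ _
  exact ⟨Equiv.ofBijective f ⟨hinj, hsurj⟩⟩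

end Aux

set_option maxHeartbeats 1000000 in
/-- In the polynomial ring `ℚ[q]` with one variable `q_σ` for each odd subset
`σ ⊆ {1,…,n}`, graded by `deg q_σ = ((|σ|-1)/2) e₀ + Σ_{i∈σ} eᵢ`, the component of degree
`(j+k, u)` has dimension `2^{2k}` whenever `u ∈ {0,1,2}^n` has `i₀` entries `0`, `j` entries
`2` and `2k+2` entries `1`. -/
theorem stmt11 (n : ℕ) (hn : 3 ≤ n) (u : Fin n → ℕ) (i₀ j k : ℕ)
    (hu : ∀ i, u i ≤ 2)
    (h0 : (Finset.univ.filter fun i => u i = 0).card = i₀)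
    (h2 : (Finset.univ.filter fun i => u i = 2).card = j)
    (h1 : (Finset.univ.filter fun i => u i = 1).card = 2 * k + 2)
    (wt : {s : Finset (Fin n) // Odd s.card} → ℕ × (Fin n → ℕ))
    (hwt : ∀ s, wt s = ((s.1.card - 1) / 2, fun i => if i ∈ s.1 then 1 else 0)) :
    Module.finrank ℚ
      ↥(MvPolynomial.weightedHomogeneousSubmodule ℚ wt ((j + k : ℕ), u))
      = 2 ^ (2 * k) := by
  classical
  have hcard : 1 < (Finset.univ.filter fun i => u i = 1).card := by rw [h1]; omega
  obtain ⟨s₀, hs₀m, s₁, hs₁m, hne⟩ := Finset.one_lt_card.mp hcard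
  have hs₀ : u s₀ = 1 := (Finset.mem_filter.mp hs₀m).2
  have hs₁ : u s₁ = 1 := (Finset.mem_filter.mp hs₁m).2
  obtain ⟨e⟩ := aux_equiv u j k wt hwt hu h2 h1 s₀ s₁ hne hs₀ hs₁
  rw [MvPolynomial.weightedHomogeneousSubmodule_eq_finsupp_supported]
  haveI : Fintype ↥{d : ({s : Finset (Fin n) // Odd s.card} →₀ ℕ) |
      Finsupp.weight wt d = ((j + k : ℕ), u)} := Fintype.ofEquiv _ e
  rw [LinearEquiv.finrank_eq (AddMonoidAlgebra.supportedEquivFinsupp _), Module.finrank_finsupp_self]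
  rw [← Fintype.card_congr e]
  have hScard : (((Finset.univ.filter fun i => u i = 1).erase s₀).erase s₁).card = 2 * k := by
    rw [Finset.card_erase_of_mem (Finset.mem_erase.mpr ⟨Ne.symm hne, hs₁m⟩),
      Finset.card_erase_of_mem hs₀m, h1]
    omega
  rw [Fintype.card_congr (Equiv.subtypeEquivRight (q := fun C =>
      C ∈ (((Finset.univ.filter fun i => u i = 1).erase s₀).erase s₁).powerset)
      (fun C => (Finset.mem_powerset).symm))]
  rw [Fintype.card_coe, Finset.card_powerset, hScard]
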